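/- Let q > 2 be real, let r' ∈ ℝ^m have nonnegative entries, and set t_e = (r'_e)^{1/(q−2)} for each e. Then for every ζ ∈ ℝ^m, (1/(2q))·γ_q(t,ζ) ≤ ∑_{e=1}^m r'_e ζ_e² + (1/2)‖ζ‖_q^q ≤ 3·γ_q(t,ζ). -/
import Mathlib


/-- The per-coordinate smoothed power function
`γ_q(t,x) = (q/2)t^{q−2}x²` if `|x| ≤ t`, and `|x|^q + (q/2 − 1)t^q` otherwise. -/
noncomputable def gam (q t x : ℝ) : ℝ :=
  if |x| ≤ t then q / 2 * t ^ (q - 2) * x ^ 2 else |x| ^ q + (q / 2 - 1) * t ^ q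

private lemma key {q : ℝ} (hq : 2 < q) (r x : ℝ) (hr : 0 ≤ r) :
    1 / (2 * q) * gam q (r ^ (1 / (q - 2))) x ≤ r * x ^ 2 + 1 / 2 * |x| ^ q ∧
    r * x ^ 2 + 1 / 2 * |x| ^ q ≤ 3 * gam q (r ^ (1 / (q - 2))) x := by
  have hq0 : (0:ℝ) < q := by linarith
  have hq2 : (0:ℝ) < q - 2 := by linarith
  set t : ℝ := r ^ (1 / (q - 2)) with htdef
  have ht0 : 0 ≤ t := Real.rpow_nonneg hr _
  have htq2 : t ^ (q - 2) = r := by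
    rw [htdef, ← Real.rpow_mul hr, one_div, inv_mul_cancel₀ (ne_of_gt hq2), Real.rpow_one]
  have hrx : 0 ≤ r * x ^ 2 := mul_nonneg hr (sq_nonneg x)
  have hxq : 0 ≤ |x| ^ q := Real.rpow_nonneg (abs_nonneg x) q
  have h2abs : |x| ^ (2:ℝ) = x ^ 2 := by
    rw [show (2:ℝ) = ((2:ℕ):ℝ) by norm_num, Real.rpow_natCast, sq_abs]
  have htq0 : 0 ≤ t ^ q := Real.rpow_nonneg ht0 q
  unfold gam
  by_cases h : |x| ≤ t
  · rw [if_pos h, htq2]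
    have hle : |x| ^ q ≤ r * x ^ 2 := by
      by_cases hx : x = 0
      · simp [hx, Real.zero_rpow (ne_of_gt hq0), hrx]
      · have hxpos : 0 < |x| := abs_pos.mpr hx
        have e1 : |x| ^ q = |x| ^ (q - 2) * x ^ 2 := by
          rw [← h2abs, ← Real.rpow_add hxpos]; ring_nf
        have e2 : |x| ^ (q - 2) ≤ t ^ (q - 2) :=
          Real.rpow_le_rpow (abs_nonneg x) h (le_of_lt hq2)
        rw [e1, ← htq2]
        exact mul_le_mul_of_nonneg_right e2 (sq_nonneg x)
    constructor
    · have heq : 1 / (2 * q) * (q / 2 * r * x ^ 2) = 1 / 4 * (r * x ^ 2) := by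
        field_simp; ring
      rw [heq]; linarith
    · nlinarith [mul_nonneg (show (0:ℝ) ≤ q - 2 by linarith) hrx]
  · rw [if_neg h]
    push_neg at h
    have hxpos : 0 < |x| := lt_of_le_of_lt ht0 h
    have ha : t ^ q ≤ r * x ^ 2 := by
      rcases eq_or_lt_of_le ht0 with h0 | h0
      · rw [← h0, Real.zero_rpow (ne_of_gt hq0)]; exact hrx
      · have e1 : t ^ q = t ^ (q - 2) * t ^ 2 := by
          rw [show t ^ 2 = t ^ (2:ℝ) by
            rw [show (2:ℝ) = ((2:ℕ):ℝ) by norm_num, Real.rpow_natCast],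
            ← Real.rpow_add h0]
          ring_nf
        rw [e1, htq2]
        have ht2 : t ^ 2 ≤ x ^ 2 := by
          rw [← sq_abs x]
          exact pow_le_pow_left₀ ht0 (le_of_lt h) 2
        nlinarith
    have hb : r * x ^ 2 ≤ |x| ^ q := by
      have e1 : |x| ^ q = |x| ^ (q - 2) * x ^ 2 := by
        rw [← h2abs, ← Real.rpow_add hxpos]; ring_nf
      have e2 : t ^ (q - 2) ≤ |x| ^ (q - 2) :=
        Real.rpow_le_rpow ht0 (le_of_lt h) (le_of_lt hq2)
      rw [e1, ← htq2]
      exact mul_le_mul_of_nonneg_right e2 (sq_nonneg x)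
    constructor
    · have H : |x| ^ q + (q / 2 - 1) * t ^ q ≤
          2 * q * (r * x ^ 2 + 1 / 2 * |x| ^ q) := by
        have A : (q / 2 - 1) * t ^ q ≤ (q / 2 - 1) * (r * x ^ 2) :=
          mul_le_mul_of_nonneg_left ha (by linarith)
        nlinarith [mul_nonneg (show (0:ℝ) ≤ q - 1 by linarith) hxq,
          mul_nonneg (show (0:ℝ) ≤ 3 * q / 2 + 1 by linarith) hrx]
      have h2q : (0:ℝ) < 2 * q := by linarith
      calc 1 / (2 * q) * (|x| ^ q + (q / 2 - 1) * t ^ q)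
          ≤ 1 / (2 * q) * (2 * q * (r * x ^ 2 + 1 / 2 * |x| ^ q)) :=
            mul_le_mul_of_nonneg_left H (by positivity)
        _ = r * x ^ 2 + 1 / 2 * |x| ^ q := by field_simp
    · nlinarith [mul_nonneg (show (0:ℝ) ≤ q / 2 - 1 by linarith) htq0]

/-- comparison inequality in Lemma 5.1, Smoothed2Gamma. -/
theorem stmt_13 {m : ℕ} {q : ℝ} (hq : 2 < q) (r' : Fin m → ℝ) (hr' : ∀ e, 0 ≤ r' e)
    (t : Fin m → ℝ) (ht : ∀ e, t e = r' e ^ (1 / (q - 2))) (ζ : Fin m → ℝ) :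
    1 / (2 * q) * (∑ e, gam q (t e) (ζ e))
        ≤ (∑ e, r' e * ζ e ^ 2) + 1 / 2 * (∑ e, |ζ e| ^ q) ∧
      (∑ e, r' e * ζ e ^ 2) + 1 / 2 * (∑ e, |ζ e| ^ q)
        ≤ 3 * ∑ e, gam q (t e) (ζ e) := by
  have H : ∀ e, 1 / (2 * q) * gam q (t e) (ζ e) ≤ r' e * ζ e ^ 2 + 1 / 2 * |ζ e| ^ q ∧
      r' e * ζ e ^ 2 + 1 / 2 * |ζ e| ^ q ≤ 3 * gam q (t e) (ζ e) := by
    intro e; rw [ht e]; exact key hq (r' e) (ζ e) (hr' e)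
  have hsum : (∑ e, r' e * ζ e ^ 2) + 1 / 2 * (∑ e, |ζ e| ^ q)
      = ∑ e, (r' e * ζ e ^ 2 + 1 / 2 * |ζ e| ^ q) := by
    rw [Finset.sum_add_distrib, Finset.mul_sum]
  constructor
  · rw [Finset.mul_sum, hsum]
    exact Finset.sum_le_sum fun e _ => (H e).1
  · rw [hsum, Finset.mul_sum]
    exact Finset.sum_le_sum fun e _ => (H e).2
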